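/- For every κ ≥ 0 and every h > 0 one has (21 − 25c_h⁴ + 6c_h⁸)(1+κ)² + (−12 + 6c_h⁴ + 3c_h⁸)(1+κ) + 9c_h⁴ > 0; that is, the numerator of the coefficient 𝖾₁₁(κ,h) is strictly positive. -/
import Mathlib


/-- `c_h := √(tanh h)`. -/
noncomputable def ch (h : ℝ) : ℝ := Real.sqrt (Real.tanh h)

theorem e11_numerator_pos (κ h : ℝ) (hκ : 0 ≤ κ) (hh : 0 < h) :
    0 < (21 - 25 * ch h ^ 4 + 6 * ch h ^ 8) * (1 + κ) ^ 2
        + (-12 + 6 * ch h ^ 4 + 3 * ch h ^ 8) * (1 + κ) + 9 * ch h ^ 4 := by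
  have hs : 0 < Real.sinh h := Real.sinh_pos_iff.2 hh
  have hc : 0 < Real.cosh h := Real.cosh_pos h
  have htanh : 0 < Real.tanh h := by
    rw [Real.tanh_eq_sinh_div_cosh]; positivity
  have htanh1 : Real.tanh h < 1 := by
    rw [Real.tanh_eq_sinh_div_cosh, div_lt_one hc]; exact Real.sinh_lt_cosh h
  have hch2 : ch h ^ 2 = Real.tanh h := Real.sq_sqrt htanh.le
  set t : ℝ := ch h ^ 4 with hts
  have h4 : t = Real.tanh h ^ 2 := by rw [hts, show (4:ℕ) = 2*2 from rfl, pow_mul, hch2]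
  have h8 : ch h ^ 8 = t ^ 2 := by rw [hts]; ring
  have ht : 0 < t := by rw [h4]; positivity
  have ht1 : t < 1 := by
    rw [h4]
    nlinarith
  rw [h8]
  nlinarith [sq_nonneg (1 + κ), sq_nonneg κ, sq_nonneg (κ * (1 - t)), mul_nonneg hκ ht.le,
    mul_nonneg (mul_nonneg hκ hκ) ht.le, mul_nonneg (mul_nonneg hκ ht.le) (sub_pos.2 ht1).le,
    sq_nonneg (3*t - 1), mul_nonneg (mul_nonneg hκ hκ) (mul_nonneg ht.le (sub_pos.2 ht1).le)]
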